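/- For all integers 0 ≤ k ≤ m, the central-style binomial inequality C(2m, 2k) ≤ 2^m · C(m, k) holds. -/

import Mathlib

private lemma central_aux (k : ℕ) :
    Nat.choose (4 * k) (2 * k) ≤ 4 ^ k * Nat.choose (2 * k) k := by
  induction k with
  | zero => simp
  | succ k IH =>
    rw [show 4 * (k+1) = 4*k+4 from by ring, show 2 * (k+1) = 2*k+2 from by ring]
    have h1 : Nat.choose (4*k+4) (2*k+2) * (2*k+2) = (4*k+4) * Nat.choose (4*k+3) (2*k+1) := by
      have h := Nat.add_one_mul_choose_eq (4*k+3) (2*k+1)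
      rw [show 4*k+3+1 = 4*k+4 from by omega, show 2*k+1+1 = 2*k+2 from by omega] at h
      exact h.symm
    have h2 : Nat.choose (4*k+2) (2*k+1) * (4*k+3) = Nat.choose (4*k+3) (2*k+1) * (2*k+2) := by
      have h := Nat.choose_mul_succ_eq (4*k+2) (2*k+1)
      rw [show 4*k+2+1 = 4*k+3 from by omega] at h
      rw [show 4*k+3 - (2*k+1) = 2*k+2 from by omega] at h
      exact h
    have h3 : (4*k+2) * Nat.choose (4*k+1) (2*k) = Nat.choose (4*k+2) (2*k+1) * (2*k+1) := by
      have h := Nat.add_one_mul_choose_eq (4*k+1) (2*k)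
      rw [show 4*k+1+1 = 4*k+2 from by omega] at h
      exact h
    have h4 : Nat.choose (4*k) (2*k) * (4*k+1) = Nat.choose (4*k+1) (2*k) * (2*k+1) := by
      have h := Nat.choose_mul_succ_eq (4*k) (2*k)
      rw [show 4*k+1 - 2*k = 2*k+1 from by omega] at h
      exact h
    have h5 : (2*k+2) * Nat.choose (2*k+1) k = Nat.choose (2*k+2) (k+1) * (k+1) := by
      have h := Nat.add_one_mul_choose_eq (2*k+1) k
      rw [show 2*k+1+1 = 2*k+2 from by omega] at h
      exact h
    have h6 : Nat.choose (2*k) k * (2*k+1) = Nat.choose (2*k+1) k * (k+1) := by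
      have h := Nat.choose_mul_succ_eq (2*k) k
      rw [show 2*k+1 - k = k+1 from by omega] at h
      exact h
    have hc : 0 < (2*k+2) * ((2*k+2) * ((2*k+1) * (2*k+1))) := by positivity
    apply Nat.le_of_mul_le_mul_right _ hc
    have e1 : Nat.choose (4*k+4) (2*k+2) * ((2*k+2) * ((2*k+2) * ((2*k+1) * (2*k+1))))
        = (4*k+4)*(4*k+3)*(4*k+2)*(4*k+1) * Nat.choose (4*k) (2*k) := by
      zify at h1 h2 h3 h4 ⊢
      linear_combination ((2*k+2)*(2*k+1)^2 : ℤ) * h1 - ((4*k+4)*(2*k+1)^2 : ℤ) * h2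
        - ((4*k+4)*(4*k+3)*(2*k+1) : ℤ) * h3 - ((4*k+4)*(4*k+3)*(4*k+2) : ℤ) * h4
    have e2 : 4 ^ (k+1) * Nat.choose (2*k+2) (k+1) * ((2*k+2) * ((2*k+2) * ((2*k+1) * (2*k+1))))
        = 16 * 4 ^ k * ((2*k+1)^3 * (2*k+2)) * Nat.choose (2*k) k := by
      zify at h5 h6 ⊢
      linear_combination (-8 * (4:ℤ)^k * (2*k+2) * (2*k+1)^2) * h5
        + (-16 * (4:ℤ)^k * (2*k+2) * (2*k+1)^2) * h6
    rw [e1, e2]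
    calc (4*k+4)*(4*k+3)*(4*k+2)*(4*k+1) * Nat.choose (4*k) (2*k)
        ≤ (4*k+4)*(4*k+3)*(4*k+2)*(4*k+1) * (4 ^ k * Nat.choose (2*k) k) :=
          Nat.mul_le_mul_left _ IH
      _ ≤ 16 * 4 ^ k * ((2*k+1)^3 * (2*k+2)) * Nat.choose (2*k) k := by
          have key : (4*k+4)*(4*k+3)*(4*k+2)*(4*k+1) ≤ 16 * ((2*k+1)^3 * (2*k+2)) := by
            nlinarith [sq_nonneg k]
          calc (4*k+4)*(4*k+3)*(4*k+2)*(4*k+1) * (4 ^ k * Nat.choose (2*k) k)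
              ≤ 16 * ((2*k+1)^3 * (2*k+2)) * (4 ^ k * Nat.choose (2*k) k) :=
                Nat.mul_le_mul_right _ key
            _ = 16 * 4 ^ k * ((2*k+1)^3 * (2*k+2)) * Nat.choose (2*k) k := by ring

private lemma main_aux (k d : ℕ) :
    Nat.choose (2 * (2*k + d)) (2 * k) ≤ 2 ^ (2*k + d) * Nat.choose (2*k + d) k := by
  induction d with
  | zero =>
    have := central_aux k
    rw [show 2 * (2*k + 0) = 4 * k from by ring, show 2*k + 0 = 2*k from by ring]
    calc Nat.choose (4*k) (2*k) ≤ 4 ^ k * Nat.choose (2*k) k := this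
      _ = 2 ^ (2*k) * Nat.choose (2*k) k := by rw [pow_mul]; norm_num
  | succ d IH =>
    set M := 2*k + d with hM
    have h1 : Nat.choose (2*M) (2*k) * (2*M+1) = Nat.choose (2*M+1) (2*k) * (2*k+2*d+1) := by
      have h := Nat.choose_mul_succ_eq (2*M) (2*k)
      rw [show 2*M+1 - 2*k = 2*k+2*d+1 from by omega] at h
      exact h
    have h2 : Nat.choose (2*M+1) (2*k) * (2*M+2) = Nat.choose (2*M+2) (2*k) * (2*k+2*d+2) := by
      have h := Nat.choose_mul_succ_eq (2*M+1) (2*k)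
      rw [show 2*M+1+1 - 2*k = 2*k+2*d+2 from by omega, show 2*M+1+1 = 2*M+2 from by ring] at h
      exact h
    have h3 : Nat.choose M k * (M+1) = Nat.choose (M+1) k * (k+d+1) := by
      have h := Nat.choose_mul_succ_eq M k
      rw [show M+1 - k = k+d+1 from by omega] at h
      exact h
    have hgoal : 2 * (2*k + (d+1)) = 2*M+2 := by omega
    have hgoal2 : 2*k + (d+1) = M+1 := by omega
    rw [hgoal, hgoal2]
    have hc : 0 < (2*k+2*d+2) * (2*k+2*d+1) := by positivity
    apply Nat.le_of_mul_le_mul_right _ hc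
    have e1 : Nat.choose (2*M+2) (2*k) * ((2*k+2*d+2) * (2*k+2*d+1))
        = Nat.choose (2*M) (2*k) * ((2*M+1) * (2*M+2)) := by
      zify at h1 h2 ⊢
      linear_combination (2*k+2*d+1 : ℤ) * h2.symm + (2*(M:ℤ)+2) * h1.symm
    rw [e1]
    calc Nat.choose (2*M) (2*k) * ((2*M+1) * (2*M+2))
        ≤ 2 ^ M * Nat.choose M k * ((2*M+1) * (2*M+2)) :=
          Nat.mul_le_mul_right _ IH
      _ = 2 ^ (M+1) * Nat.choose (M+1) k * ((k+d+1) * (2*M+1)) := by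
          zify at h3 ⊢
          linear_combination ((2:ℤ) ^ M * (2*M+1) * 2) * h3
      _ ≤ 2 ^ (M+1) * Nat.choose (M+1) k * ((k+d+1) * (2*(2*k+2*d+1))) := by
          apply Nat.mul_le_mul_left
          apply Nat.mul_le_mul_left
          omega
      _ = 2 ^ (M+1) * Nat.choose (M+1) k * ((2*k+2*d+2) * (2*k+2*d+1)) := by ring

theorem stmt_0 (m k : ℕ) (hk : k ≤ m) :
    Nat.choose (2 * m) (2 * k) ≤ 2 ^ m * Nat.choose m k := by
  rcases le_or_gt (2*k) m with h | h
  · obtain ⟨d, rfl⟩ := Nat.exists_eq_add_of_le h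
    exact main_aux k d
  · have h2 := main_aux (m - k) (2*k - m)
    rw [show 2*(m-k) + (2*k - m) = m from by omega] at h2
    rw [show 2*(m-k) = 2*m - 2*k from by omega] at h2
    rw [Nat.choose_symm (by omega), Nat.choose_symm hk] at h2
    exact h2
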